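/- Let V be a finite-dimensional real vector space. The space A(V) of algebraic curvature tensors on V equals the linear span of the set {α(A) : A an alternating bilinear form on V}, where α(A)(w,x,y,z) := 2A(w,x)A(y,z) + A(w,y)A(x,z) − A(w,z)A(x,y). -/

import Mathlib

section Aux

variable {V : Type} [AddCommGroup V] [Module ℝ V]

local notation "ML" V => MultilinearMap ℝ (fun _ : Fin 4 => V) ℝ

/-- elementary 4-linear map `f ⊗ g ⊗ h ⊗ k`. -/
def elem4 (f g h k : V →ₗ[ℝ] ℝ) : ML V where
  toFun m := f (m 0) * g (m 1) * h (m 2) * k (m 3)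
  map_update_add' := by
    intro dec m i x y
    have hdec : dec = instDecidableEqFin 4 := Subsingleton.elim _ _
    subst hdec
    fin_cases i <;>
      (simp +decide only [Function.update_apply, if_true, if_false]; simp; ring)
  map_update_smul' := by
    intro dec m i c x
    have hdec : dec = instDecidableEqFin 4 := Subsingleton.elim _ _
    subst hdec
    fin_cases i <;>
      (simp +decide only [Function.update_apply, if_true, if_false]; simp; ring)

/-- `α(A)` as a multilinear map. -/
def amap (A : V →ₗ[ℝ] V →ₗ[ℝ] ℝ) : ML V where
  toFun m := 2 * A (m 0) (m 1) * A (m 2) (m 3) + A (m 0) (m 2) * A (m 1) (m 3)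
      - A (m 0) (m 3) * A (m 1) (m 2)
  map_update_add' := by
    intro dec m i x y
    have hdec : dec = instDecidableEqFin 4 := Subsingleton.elim _ _
    subst hdec
    fin_cases i <;>
      (simp +decide only [Function.update_apply, if_true, if_false]; simp; ring)
  map_update_smul' := by
    intro dec m i c x
    have hdec : dec = instDecidableEqFin 4 := Subsingleton.elim _ _
    subst hdec
    fin_cases i <;>
      (simp +decide only [Function.update_apply, if_true, if_false]; simp; ring)

/-- wedge of two functionals as a bilinear form. -/
def wedge (f g : V →ₗ[ℝ] ℝ) : V →ₗ[ℝ] V →ₗ[ℝ] ℝ :=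
  LinearMap.mk₂ ℝ (fun x y => f x * g y - f y * g x)
    (by intros; simp; ring) (by intros; simp; ring)
    (by intros; simp; ring) (by intros; simp; ring)

@[simp] lemma wedge_apply (f g : V →ₗ[ℝ] ℝ) (x y : V) :
    wedge f g x y = f x * g y - f y * g x := rfl

/-- explicit permutations of `Fin 4`. -/
def p4 (a b c d a' b' c' d' : Fin 4)
    (h₁ : ∀ i, ![a',b',c',d'] (![a,b,c,d] i) = i := by decide)
    (h₂ : ∀ i, ![a,b,c,d] (![a',b',c',d'] i) = i := by decide) : Fin 4 ≃ Fin 4 :=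
  ⟨(![a,b,c,d] : Fin 4 → Fin 4), ![a',b',c',d'], h₁, h₂⟩

@[simp] lemma p4_apply (a b c d a' b' c' d' : Fin 4) (h₁ h₂) (i : Fin 4) :
    p4 a b c d a' b' c' d' h₁ h₂ i = ![a,b,c,d] i := rfl

lemma ddc_eval (T : ML V) (σ : Fin 4 ≃ Fin 4) (m : Fin 4 → V) :
    T.domDomCongr σ m = T ![m (σ 0), m (σ 1), m (σ 2), m (σ 3)] := by
  rw [MultilinearMap.domDomCongr_apply]
  congr 1
  funext i
  fin_cases i <;> simp

lemma ext4 {T T' : ML V} (h : ∀ w x y z : V, T ![w,x,y,z] = T' ![w,x,y,z]) : T = T' := by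
  ext m
  have hm : ![m 0, m 1, m 2, m 3] = m := by
    funext i; fin_cases i <;> simp
  have := h (m 0) (m 1) (m 2) (m 3)
  rwa [hm] at this

/-- the symmetrization operator. -/
noncomputable def pA (T : ML V) : ML V :=
    (2:ℝ) • T.domDomCongr (p4 0 1 2 3 0 1 2 3)
    + (-2:ℝ) • T.domDomCongr (p4 0 1 3 2 0 1 3 2)
    + (-2:ℝ) • T.domDomCongr (p4 1 0 2 3 1 0 2 3)
    + (2:ℝ) • T.domDomCongr (p4 1 0 3 2 1 0 3 2)
    + (2:ℝ) • T.domDomCongr (p4 2 3 0 1 2 3 0 1)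
    + (-2:ℝ) • T.domDomCongr (p4 3 2 0 1 2 3 1 0)
    + (-2:ℝ) • T.domDomCongr (p4 2 3 1 0 3 2 0 1)
    + (2:ℝ) • T.domDomCongr (p4 3 2 1 0 3 2 1 0)
    + (1:ℝ) • T.domDomCongr (p4 0 2 1 3 0 2 1 3)
    + (-1:ℝ) • T.domDomCongr (p4 0 2 3 1 0 3 1 2)
    + (-1:ℝ) • T.domDomCongr (p4 2 0 1 3 1 2 0 3)
    + (1:ℝ) • T.domDomCongr (p4 2 0 3 1 1 3 0 2)
    + (1:ℝ) • T.domDomCongr (p4 1 3 0 2 2 0 3 1)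
    + (-1:ℝ) • T.domDomCongr (p4 1 3 2 0 3 0 2 1)
    + (-1:ℝ) • T.domDomCongr (p4 3 1 0 2 2 1 3 0)
    + (1:ℝ) • T.domDomCongr (p4 3 1 2 0 3 1 2 0)
    + (-1:ℝ) • T.domDomCongr (p4 0 3 1 2 0 2 3 1)
    + (1:ℝ) • T.domDomCongr (p4 0 3 2 1 0 3 2 1)
    + (1:ℝ) • T.domDomCongr (p4 3 0 1 2 1 2 3 0)
    + (-1:ℝ) • T.domDomCongr (p4 3 0 2 1 1 3 2 0)
    + (-1:ℝ) • T.domDomCongr (p4 1 2 0 3 2 0 1 3)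
    + (1:ℝ) • T.domDomCongr (p4 1 2 3 0 3 0 1 2)
    + (1:ℝ) • T.domDomCongr (p4 2 1 0 3 2 1 0 3)
    + (-1:ℝ) • T.domDomCongr (p4 2 1 3 0 3 1 0 2)

lemma pA_add (T T' : ML V) : pA (T + T') = pA T + pA T' := by
  refine ext4 fun w x y z => ?_
  simp [pA, ddc_eval]
  ring

lemma pA_smul (c : ℝ) (T : ML V) : pA (c • T) = c • pA T := by
  refine ext4 fun w x y z => ?_
  simp [pA, ddc_eval]
  ring

lemma pA_zero : pA (0 : ML V) = 0 := by
  refine ext4 fun w x y z => ?_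
  simp [pA, ddc_eval]

lemma pA_elem (f g h k : V →ₗ[ℝ] ℝ) :
    pA (elem4 f g h k)
      = amap (wedge f g + wedge h k) - amap (wedge f g) - amap (wedge h k) := by
  refine ext4 fun w x y z => ?_
  simp [pA, ddc_eval, elem4, amap, MultilinearMap.coe_mk]
  ring

lemma wedge_alt (f g : V →ₗ[ℝ] ℝ) (x y : V) : wedge f g x y = - wedge f g y x := by
  rw [wedge_apply, wedge_apply]; ring

end Aux

/-- For a finite-dimensional real vector space `V`, the space `A(V)` of
algebraic curvature tensors equals the linear span of `{α(A) : A alternating bilinear}`,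
where `α(A)(w,x,y,z) = 2A(w,x)A(y,z) + A(w,y)A(x,z) − A(w,z)A(x,y)`. -/
theorem stmt_1 (V : Type) [AddCommGroup V] [Module ℝ V] [FiniteDimensional ℝ V] :
    {R : MultilinearMap ℝ (fun _ : Fin 4 => V) ℝ |
      (∀ w x y z : V, R ![w, x, y, z] = - R ![w, x, z, y]) ∧
      (∀ w x y z : V, R ![w, x, y, z] = R ![y, z, w, x]) ∧
      (∀ w x y z : V, R ![w, x, y, z] + R ![w, y, z, x] + R ![w, z, x, y] = 0)} =
    ↑(Submodule.span ℝ {T : MultilinearMap ℝ (fun _ : Fin 4 => V) ℝ |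
      ∃ A : V →ₗ[ℝ] V →ₗ[ℝ] ℝ, (∀ x y : V, A x y = - A y x) ∧
        ∀ w x y z : V,
          T ![w, x, y, z] = 2 * A w x * A y z + A w y * A x z - A w z * A x y}) := by
  classical
  set S : Set (MultilinearMap ℝ (fun _ : Fin 4 => V) ℝ) :=
    {T | ∃ A : V →ₗ[ℝ] V →ₗ[ℝ] ℝ, (∀ x y : V, A x y = - A y x) ∧
      ∀ w x y z : V,
        T ![w, x, y, z] = 2 * A w x * A y z + A w y * A x z - A w z * A x y} with hS
  -- membership of αmaps in the span
  have hamap : ∀ A : V →ₗ[ℝ] V →ₗ[ℝ] ℝ, (∀ x y : V, A x y = - A y x) →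
      amap A ∈ Submodule.span ℝ S := by
    intro A hA
    refine Submodule.subset_span ⟨A, hA, fun w x y z => ?_⟩
    simp [amap]
  -- spanning by elementary tensors
  have hspan : ∀ T : MultilinearMap ℝ (fun _ : Fin 4 => V) ℝ,
      T ∈ Submodule.span ℝ {E : MultilinearMap ℝ (fun _ : Fin 4 => V) ℝ |
        ∃ f g h k : V →ₗ[ℝ] ℝ, E = elem4 f g h k} := by
    intro T
    set b := Module.finBasis ℝ V with hb
    have key : T = ∑ v : Fin 4 → Fin (Module.finrank ℝ V),
        T (fun i => b (v i)) • elem4 (b.coord (v 0)) (b.coord (v 1)) (b.coord (v 2))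
          (b.coord (v 3)) := by
      refine Module.Basis.ext_multilinear (fun _ => b) fun v => ?_
      rw [MultilinearMap.sum_apply]
      rw [Finset.sum_eq_single v]
      · simp [elem4]
      · intro u _ huv
        have hd : u 0 ≠ v 0 ∨ u 1 ≠ v 1 ∨ u 2 ≠ v 2 ∨ u 3 ≠ v 3 := by
          by_contra hc
          push_neg at hc
          obtain ⟨e0, e1, e2, e3⟩ := hc
          exact huv (funext fun i => by fin_cases i <;> assumption)
        rcases hd with h | h | h | h <;>
          simp [elem4, Module.Basis.coord_apply, Module.Basis.repr_self,
            Finsupp.single_eq_of_ne' (Ne.symm h)]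
      · intro h; exact absurd (Finset.mem_univ v) h
    rw [key]
    exact Submodule.sum_mem _ fun u _ =>
      Submodule.smul_mem _ _ (Submodule.subset_span ⟨_, _, _, _, rfl⟩)
  -- pA lands in the span
  have hpA : ∀ T : MultilinearMap ℝ (fun _ : Fin 4 => V) ℝ,
      pA T ∈ Submodule.span ℝ S := by
    intro T
    refine Submodule.span_induction (p := fun T _ => pA T ∈ Submodule.span ℝ S)
      ?_ ?_ ?_ ?_ (hspan T)
    · rintro E ⟨f, g, h, k, rfl⟩
      rw [pA_elem]
      have m1 := hamap (wedge f g + wedge h k) (fun x y => by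
        simp only [LinearMap.add_apply, wedge_apply]; ring)
      have m2 := hamap (wedge f g) (fun x y => wedge_alt f g x y)
      have m3 := hamap (wedge h k) (fun x y => wedge_alt h k x y)
      exact Submodule.sub_mem _ (Submodule.sub_mem _ m1 m2) m3
    · show pA (0 : MultilinearMap ℝ (fun _ : Fin 4 => V) ℝ) ∈ _
      rw [pA_zero]; exact Submodule.zero_mem _
    · intro T T' _ _ h h'
      rw [pA_add]; exact Submodule.add_mem _ h h'
    · intro c T _ h
      rw [pA_smul]; exact Submodule.smul_mem _ _ h
  ext R
  simp only [Set.mem_setOf_eq, SetLike.mem_coe]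
  constructor
  · rintro ⟨h1, h2, h3⟩
    have k2 : pA R = (24:ℝ) • R := by
      refine ext4 fun w x y z => ?_
      simp only [pA, MultilinearMap.add_apply, MultilinearMap.smul_apply, ddc_eval,
        smul_eq_mul, p4_apply, Matrix.cons_val_zero, Matrix.cons_val_one, Matrix.head_cons,
        Matrix.cons_val_two, Matrix.tail_cons, Matrix.cons_val_three, Matrix.head_fin_const]
      linarith [h1 w x y z, h2 w x y z, h3 w x y z, h1 w x z y, h2 w x z y, h3 w x z y, h1 w y x z, h2 w y x z, h3 w y x z, h1 w y z x, h2 w y z x, h3 w y z x, h1 w z x y, h2 w z x y, h3 w z x y, h1 w z y x, h2 w z y x, h3 w z y x, h1 x w y z, h2 x w y z, h3 x w y z, h1 x w z y, h2 x w z y, h3 x w z y, h1 x y w z, h2 x y w z, h3 x y w z, h1 x y z w, h2 x y z w, h3 x y z w, h1 x z w y, h2 x z w y, h3 x z w y, h1 x z y w, h2 x z y w, h3 x z y w, h1 y w x z, h2 y w x z, h3 y w x z, h1 y w z x, h2 y w z x, h3 y w z x, h1 y x w z, h2 y x w z, h3 y x w z, h1 y x z w, h2 y x z w, h3 y x z w,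 h1 y z w x, h2 y z w x, h3 y z w x, h1 y z x w, h2 y z x w, h3 y z x w, h1 z w x y, h2 z w x y, h3 z w x y, h1 z w y x, h2 z w y x, h3 z w y x, h1 z x w y, h2 z x w y, h3 z x w y, h1 z x y w, h2 z x y w, h3 z x y w, h1 z y w x, h2 z y w x, h3 z y w x, h1 z y x w, h2 z y x w, h3 z y x w]
    have : R = (24:ℝ)⁻¹ • pA R := by
      rw [k2, smul_smul]; norm_num
    rw [this]
    exact Submodule.smul_mem _ _ (hpA R)
  · intro hR
    refine Submodule.span_induction (p := fun T _ =>
      (∀ w x y z : V, T ![w, x, y, z] = - T ![w, x, z, y]) ∧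
      (∀ w x y z : V, T ![w, x, y, z] = T ![y, z, w, x]) ∧
      (∀ w x y z : V, T ![w, x, y, z] + T ![w, y, z, x] + T ![w, z, x, y] = 0))
      ?_ ?_ ?_ ?_ hR
    · rintro T ⟨A, hA, hT⟩
      refine ⟨fun w x y z => ?_, fun w x y z => ?_, fun w x y z => ?_⟩
      · rw [hT w x y z, hT w x z y, hA z y]; ring
      · rw [hT w x y z, hT y z w x, hA y w, hA z x, hA y x, hA z w]; ring
      · rw [hT w x y z, hT w y z x, hT w z x y, hA z x, hA y x, hA z y]; ring
    · exact ⟨fun _ _ _ _ => by simp, fun _ _ _ _ => by simp, fun _ _ _ _ => by simp⟩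
    · rintro T T' _ _ ⟨p1, p2, p3⟩ ⟨q1, q2, q3⟩
      refine ⟨fun w x y z => ?_, fun w x y z => ?_, fun w x y z => ?_⟩ <;>
        simp only [MultilinearMap.add_apply]
      · linarith [p1 w x y z, q1 w x y z]
      · linarith [p2 w x y z, q2 w x y z]
      · linarith [p3 w x y z, q3 w x y z]
    · rintro c T _ ⟨p1, p2, p3⟩
      refine ⟨fun w x y z => ?_, fun w x y z => ?_, fun w x y z => ?_⟩ <;>
        simp only [MultilinearMap.smul_apply, smul_eq_mul]
      · linear_combination c * p1 w x y z
      · linear_combination c * p2 w x y z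
      · linear_combination c * p3 w x y z
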